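/- Let n ≥ 5 be an integer and let S ⊆ V(Q_n) with |S| = 2^{n−1} and Type(S) > 2^{n−3}. Then θ(n,S) ≥ 3·2^{n−2}. -/

import Mathlib

open Finset

/-- Two vertices of the hypercube `Q_n` are adjacent iff they differ in exactly one
coordinate. -/
def cubeEdge {n : ℕ} (u v : Fin n → Bool) : Prop :=
  (Finset.univ.filter (fun i => u i ≠ v i)).card = 1

instance {n : ℕ} (u v : Fin n → Bool) : Decidable (cubeEdge u v) := by
  unfold cubeEdge; infer_instance

/-- `θ(n,S)`: the number of edges of `Q_n` with exactly one endpoint in `S`. -/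
def edgeBoundary (n : ℕ) (S : Finset (Fin n → Bool)) : ℕ :=
  (Finset.univ.filter (fun p : (Fin n → Bool) × (Fin n → Bool) =>
    p.1 ∈ S ∧ p.2 ∉ S ∧ cubeEdge p.1 p.2)).card

/-- `θ(n,k) = min {θ(n,S) : S ⊆ V(Q_n), |S| = k}`. -/
noncomputable def thetaMin (n k : ℕ) : ℕ :=
  sInf {m | ∃ S : Finset (Fin n → Bool), S.card = k ∧ edgeBoundary n S = m}

/-- The half plane `{x : x_i = a}` of `Q_n`. -/
def halfPlane (n : ℕ) (i : Fin n) (a : Bool) : Finset (Fin n → Bool) :=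
  Finset.univ.filter (fun x => x i = a)

/-- `Type(S) = min_H |S ∩ H|`, minimum over the `2n` half planes of `Q_n`. -/
noncomputable def typeOf (n : ℕ) (S : Finset (Fin n → Bool)) : ℕ :=
  sInf {m | ∃ (i : Fin n) (a : Bool), (S ∩ halfPlane n i a).card = m}

/-- `θ(n,k,t) = min {θ(n,S) : |S| = k, Type(S) = t}`. -/
noncomputable def thetaMinType (n k t : ℕ) : ℕ :=
  sInf {m | ∃ S : Finset (Fin n → Bool),
    S.card = k ∧ typeOf n S = t ∧ edgeBoundary n S = m}

/-- Graph distance on the cycle `C_m` with vertices labelled by naturals. -/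
def cycleDist (m a b : ℕ) : ℕ := min (Nat.dist a b) (m - Nat.dist a b)

/-- The wirelength of an embedding `η` of `Q_n` into the cycle `C_{2^n}`:
the sum of cycle distances over all (unordered) edges of `Q_n`.  (The sum over
ordered pairs counts every edge twice, whence the division by `2`.) -/
def wirelength (n : ℕ) (η : (Fin n → Bool) → ℕ) : ℕ :=
  ((Finset.univ.filter (fun p : (Fin n → Bool) × (Fin n → Bool) =>
    cubeEdge p.1 p.2)).sum (fun p => cycleDist (2^n) (η p.1) (η p.2))) / 2

/-- The reflected Gray code embedding `ξ_n(x) = (y)_2 + 1`, where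
`y_i = (x_1 + ⋯ + x_i) mod 2`. -/
def xi (n : ℕ) (x : Fin n → Bool) : ℕ :=
  (Finset.univ.sum (fun i : Fin n =>
    ((Finset.univ.filter (fun j : Fin n => j ≤ i ∧ x j = true)).card % 2)
      * 2 ^ (n - 1 - (i : ℕ)))) + 1

/-- `f(x) = 3/4 − (64/7)(x − 1/2)²`. -/
noncomputable def fGuu (x : ℝ) : ℝ := 3/4 - 64/7 * (x - 1/2)^2

/-- `takDelta i` is `Δ_{i+1}`: `Δ_1(x) = 1/2 − |x − 1/2|`,
`Δ_{n}(x) = (1/2)Δ_{n−1}(2x − ⌊2x⌋)`. -/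
noncomputable def takDelta : ℕ → ℝ → ℝ
  | 0, x => 1/2 - |x - 1/2|
  | n+1, x => takDelta n (2*x - (⌊2*x⌋ : ℝ)) / 2

/-- `m_n(x) = Σ_{i=1}^n Δ_i(x)`, the n-th partial sum of the Takagi function. -/
noncomputable def mTakagi (n : ℕ) (x : ℝ) : ℝ := ∑ i ∈ Finset.range n, takDelta i x

/-- `y_N = ⌈2^N/24⌉ / 2^N`. -/
noncomputable def yGuu (N : ℕ) : ℝ := (⌈(2^N : ℝ)/24⌉ : ℝ) / 2^N

/-- `p_N = 1/2 − y_N`. -/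
noncomputable def pGuu (N : ℕ) : ℝ := 1/2 - yGuu N

/-- `g_{n,i,a}^{-1}(S)`, where `g_{n,i,a}` inserts the letter `a` at position `i`. -/
def gPre (n : ℕ) (i : Fin (n+1)) (a : Bool) (S : Finset (Fin (n+1) → Bool)) :
    Finset (Fin n → Bool) :=
  Finset.univ.filter (fun x => i.insertNth a x ∈ S)

-- ===== auxiliary development =====

/-- binary digit sum -/
def dsum (k : ℕ) : ℕ := (Nat.digits 2 k).sum

/-- Harper's edge function: max number of edges of a k-subset of a hypercube. -/
def Ecal (k : ℕ) : ℕ := ∑ i ∈ Finset.range k, dsum i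

lemma dsum_zero : dsum 0 = 0 := by simp [dsum]

lemma dsum_one : dsum 1 = 1 := by simp [dsum]

lemma dsum_two_mul (k : ℕ) : dsum (2*k) = dsum k := by
  rcases Nat.eq_zero_or_pos k with h | h
  · subst h; rfl
  · unfold dsum
    rw [Nat.digits_def' (by norm_num) (by omega)]
    simp [Nat.mul_div_cancel_left _ (by norm_num : 0 < 2), Nat.mul_mod_right]

lemma dsum_two_mul_add_one (k : ℕ) : dsum (2*k+1) = dsum k + 1 := by
  unfold dsum
  rw [Nat.digits_def' (by norm_num) (by omega)]
  have h1 : (2*k+1) % 2 = 1 := by omega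
  have h2 : (2*k+1) / 2 = k := by omega
  rw [h1, h2]; simp [Nat.add_comm]

lemma dsum_le (m : ℕ) : ∀ i, i < 2^m → dsum i ≤ m := by
  induction m with
  | zero => intro i hi; interval_cases i; simp [dsum_zero]
  | succ m ih =>
    intro i hi
    rcases Nat.even_or_odd i with ⟨j, hj⟩ | ⟨j, hj⟩
    · have : i = 2*j := by omega
      subst this
      rw [dsum_two_mul]
      have := ih j (by rw [pow_succ] at hi; omega)
      omega
    · subst hj
      rw [dsum_two_mul_add_one]
      have := ih j (by rw [pow_succ] at hi; omega)
      omega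

lemma dsum_reflect (m : ℕ) : ∀ i, i < 2^m → dsum (2^m - 1 - i) + dsum i = m := by
  induction m with
  | zero => intro i hi; interval_cases i; simp [dsum_zero]
  | succ m ih =>
    intro i hi
    have h2m : 2^(m+1) = 2*2^m := by ring
    rcases Nat.even_or_odd i with ⟨j, hj⟩ | ⟨j, hj⟩
    · have hi' : i = 2*j := by omega
      subst hi'
      have hj' : j < 2^m := by omega
      have key : 2^(m+1) - 1 - 2*j = 2*(2^m - 1 - j) + 1 := by
        have : 1 ≤ 2^m := Nat.one_le_two_pow
        omega
      rw [key, dsum_two_mul_add_one, dsum_two_mul]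
      have := ih j hj'
      omega
    · subst hj
      have hj' : j < 2^m := by omega
      have key : 2^(m+1) - 1 - (2*j+1) = 2*(2^m - 1 - j) := by
        have : 1 ≤ 2^m := Nat.one_le_two_pow
        omega
      rw [key, dsum_two_mul, dsum_two_mul_add_one]
      have := ih j hj'
      omega

lemma dsum_no_carry (t : ℕ) : ∀ a b, a + b = 2^t - 1 → dsum a + dsum b = t := by
  induction t with
  | zero =>
    intro a b h
    have ha : a = 0 := by omega
    have hb : b = 0 := by omega
    subst ha; subst hb; simp [dsum_zero]
  | succ t ih =>
    intro a b h
    have h2 : 2^(t+1) = 2*2^t := by ring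
    have h1 : 1 ≤ 2^t := Nat.one_le_two_pow
    rcases Nat.even_or_odd a with ⟨j, hj⟩ | ⟨j, hj⟩
    · have ha : a = 2*j := by omega
      obtain ⟨k, hk⟩ : ∃ k, b = 2*k+1 := by
        rcases Nat.even_or_odd b with ⟨k, hk⟩ | ⟨k, hk⟩
        · omega
        · exact ⟨k, by omega⟩
      subst ha; subst hk
      rw [dsum_two_mul, dsum_two_mul_add_one]
      have := ih j k (by omega)
      omega
    · have ha : a = 2*j+1 := by omega
      obtain ⟨k, hk⟩ : ∃ k, b = 2*k := by
        rcases Nat.even_or_odd b with ⟨k, hk⟩ | ⟨k, hk⟩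
        · exact ⟨k, by omega⟩
        · omega
      subst ha; subst hk
      rw [dsum_two_mul, dsum_two_mul_add_one]
      have := ih j k (by omega)
      omega

lemma Ecal_zero : Ecal 0 = 0 := rfl

lemma Ecal_one : Ecal 1 = 0 := by simp [Ecal, dsum_zero]

lemma Ecal_succ (k : ℕ) : Ecal (k+1) = Ecal k + dsum k := Finset.sum_range_succ _ _

lemma Ecal_two_mul (k : ℕ) : Ecal (2*k) = 2 * Ecal k + k := by
  induction k with
  | zero => rfl
  | succ k ih =>
    have h : 2*(k+1) = (2*k+1) + 1 := by ring
    rw [h, Ecal_succ, dsum_two_mul_add_one, Ecal_succ]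
    rw [ih, dsum_two_mul, Ecal_succ]
    omega

lemma Ecal_two_mul_add_one (k : ℕ) : Ecal (2*k+1) = 2 * Ecal k + k + dsum k := by
  rw [Ecal_succ, Ecal_two_mul, dsum_two_mul]

lemma Ecal_pow (m : ℕ) : 2 * Ecal (2^m) = m * 2^m := by
  induction m with
  | zero => simp [Ecal_one]
  | succ m ih =>
    have h : 2^(m+1) = 2 * 2^m := by ring
    rw [h, Ecal_two_mul]
    have h2 : (m+1) * (2*2^m) = 2*(m*2^m) + 2*2^m := by ring
    omega

lemma dsum_pow_add (m : ℕ) : ∀ i, i < 2^m → dsum (2^m + i) = dsum i + 1 := by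
  induction m with
  | zero =>
    intro i hi
    interval_cases i
    simp [dsum_one, dsum_zero]
  | succ m ih =>
    intro i hi
    have h2 : 2^(m+1) = 2*2^m := by ring
    rcases Nat.even_or_odd i with ⟨j, hj⟩ | ⟨j, hj⟩
    · have : i = 2*j := by omega
      subst this
      have hh : 2^(m+1) + 2*j = 2*(2^m + j) := by omega
      rw [hh, dsum_two_mul, dsum_two_mul, ih j (by omega)]
    · subst hj
      have hh : 2^(m+1) + (2*j+1) = 2*(2^m + j)+1 := by omega
      rw [hh, dsum_two_mul_add_one, dsum_two_mul_add_one, ih j (by omega)]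

lemma Ecal_pow_add (m : ℕ) (r : ℕ) (hr : r ≤ 2^m) :
    Ecal (2^m + r) = Ecal (2^m) + r + Ecal r := by
  induction r with
  | zero => simp [Ecal_zero]
  | succ r ih =>
    have hr' : r ≤ 2^m := by omega
    rw [← Nat.add_assoc, Ecal_succ, ih hr', Ecal_succ, dsum_pow_add m r (by omega)]
    omega

/-- reflection identity: if x + y = 2^m then E x + m y = E 2^m + E y -/
lemma Ecal_reflect (m x y : ℕ) (h : x + y = 2^m) :
    Ecal x + m * y = Ecal (2^m) + Ecal y := by
  have hsplit : Ecal (2^m) = Ecal x + ∑ i ∈ Finset.Ico x (2^m), dsum i := by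
    have hc := Finset.sum_Ico_consecutive dsum (Nat.zero_le x) (show x ≤ 2^m by omega)
    unfold Ecal
    simp only [Finset.range_eq_Ico]
    exact hc.symm
  have hre : ∑ i ∈ Finset.Ico x (2^m), dsum i = ∑ j ∈ Finset.range y, dsum (2^m - 1 - j) := by
    apply Finset.sum_nbij' (fun i => 2^m - 1 - i) (fun j => 2^m - 1 - j)
    · intro a ha; simp only [Finset.mem_Ico] at ha; simp only [Finset.mem_range]; omega
    · intro a ha; simp only [Finset.mem_range] at ha; simp only [Finset.mem_Ico]; omega
    · intro a ha; simp only [Finset.mem_Ico] at ha; omega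
    · intro a ha; simp only [Finset.mem_range] at ha; omega
    · intro a ha; simp only [Finset.mem_Ico] at ha; congr 1; omega
  have hsum : ∑ j ∈ Finset.range y, dsum (2^m - 1 - j) + Ecal y = m * y := by
    unfold Ecal
    rw [← Finset.sum_add_distrib]
    have hterm : ∀ j ∈ Finset.range y, dsum (2^m - 1 - j) + dsum j = m := by
      intro j hj
      simp only [Finset.mem_range] at hj
      exact dsum_reflect m j (by omega)
    rw [Finset.sum_congr rfl hterm]
    simp [Nat.mul_comm]
  omega

lemma crux_aux : ∀ N a b, a + b ≤ N → a ≤ b → Ecal a + Ecal b + a ≤ Ecal (a+b) := by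
  intro N
  induction N with
  | zero =>
    intro a b h hab
    have ha : a = 0 := by omega
    have hb : b = 0 := by omega
    subst ha; subst hb; simp [Ecal_zero]
  | succ N ih =>
    intro a b hN hab
    rcases Nat.eq_zero_or_pos a with ha | ha
    · subst ha; simp [Ecal_zero]
    have hs : 2 ≤ a + b := by omega
    have hm1 : 2^(Nat.log 2 (a+b)) ≤ a + b := Nat.pow_log_le_self 2 (by omega)
    have hm2 : a + b < 2^(Nat.log 2 (a+b) + 1) := Nat.lt_pow_succ_log_self (by norm_num) _
    set m := Nat.log 2 (a+b) with hmdef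
    have hm0 : 1 ≤ m := by
      by_contra h
      have : m = 0 := by omega
      rw [this] at hm2; norm_num at hm2; omega
    rw [pow_succ] at hm2
    clear_value m
    by_cases hc0 : a + b = 2^m
    · -- exact power of two
      obtain ⟨m', rfl⟩ : ∃ m', m = m' + 1 := ⟨m - 1, by omega⟩
      have hpow : 2^(m'+1) = 2*2^(m') := by ring
      have htarget : Ecal (2^(m'+1)) = 2 * Ecal (2^(m')) + 2^(m') := by
        rw [hpow, Ecal_two_mul]
      rcases Nat.even_or_odd a with ⟨α, hα⟩ | ⟨α, hα⟩
      · -- a even hence b even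
        have ha2 : a = 2*α := by omega
        obtain ⟨β, hb2⟩ : ∃ β, b = 2*β := by
          rcases Nat.even_or_odd b with ⟨β, h2⟩ | ⟨β, h2⟩
          · exact ⟨β, by omega⟩
          · exfalso; omega
        have hαβ : α + β = 2^(m') := by omega
        have hih := ih α β (by omega) (by omega)
        rw [hαβ] at hih
        rw [hc0, htarget, ha2, hb2, Ecal_two_mul, Ecal_two_mul]
        omega
      · -- both odd
        have ha2 : a = 2*α+1 := by omega
        obtain ⟨β, hb2⟩ : ∃ β, b = 2*β+1 := by
          rcases Nat.even_or_odd b with ⟨β, h2⟩ | ⟨β, h2⟩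
          · exfalso; omega
          · exact ⟨β, by omega⟩
        have h1 : (1:ℕ) ≤ 2^(m') := Nat.one_le_two_pow
        have hαβ : α + β = 2^(m') - 1 := by omega
        have hih := ih α β (by omega) (by omega)
        rw [hαβ] at hih
        have hdno := dsum_no_carry m' α β hαβ
        have hd : dsum (2^(m') - 1) = m' := by
          have := dsum_reflect m' 0 (by omega)
          rw [Nat.sub_zero, dsum_zero] at this
          omega
        have hE1 : Ecal (2^(m')) = Ecal (2^(m') - 1) + m' := by
          conv_lhs => rw [show 2^(m') = (2^(m') - 1) + 1 by omega]
          rw [Ecal_succ, hd]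
        rw [hc0, htarget, ha2, hb2, Ecal_two_mul_add_one, Ecal_two_mul_add_one]
        omega
    · -- c ≥ 1
      set c := a + b - 2^m with hcdef
      have hc1 : 1 ≤ c := by omega
      have hcm : c < 2^m := by omega
      have htarget : Ecal (a+b) = Ecal (2^m) + c + Ecal c := by
        have : a + b = 2^m + c := by omega
        rw [this, Ecal_pow_add m c (by omega)]
      by_cases hb : 2^m ≤ b
      · -- b contains the whole power block
        set b'' := b - 2^m with hb''def
        have hab'' : a + b'' = c := by omega
        have hEb : Ecal b = Ecal (2^m) + b'' + Ecal b'' := by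
          have : b = 2^m + b'' := by omega
          rw [this, Ecal_pow_add m b'' (by omega)]
        have hsub : Ecal a + Ecal b'' ≤ Ecal c := by
          rcases le_total a b'' with h | h
          · have := ih a b'' (by omega) h
            rw [hab''] at this; omega
          · have := ih b'' a (by omega) h
            rw [Nat.add_comm b'' a, hab''] at this; omega
        omega
      · -- a ≤ b < 2^m
        push_neg at hb
        set abar := 2^m - a with habar
        set bbar := 2^m - b with hbbar
        have h1 : a = c + bbar := by omega
        have h2 : bbar ≤ abar := by omega
        have h3 : abar + bbar = 2^m - c := by omega
        have hih := ih bbar abar (by omega) h2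
        rw [show bbar + abar = 2^m - c by omega] at hih
        have R1 := Ecal_reflect m a abar (by omega)
        have R2 := Ecal_reflect m b bbar (by omega)
        have R3 := Ecal_reflect m (2^m - c) c (by omega)
        have hmul : m*abar + m*bbar + m*c = m*2^m := by
          rw [← Nat.mul_add, ← Nat.mul_add]
          congr 1
          omega
        have hEp := Ecal_pow m
        omega

lemma Ecal_superadd (a b : ℕ) : Ecal a + Ecal b + min a b ≤ Ecal (a+b) := by
  rcases le_total a b with h | h
  · have := crux_aux (a+b) a b le_rfl h
    rw [min_eq_left h]; omega
  · have := crux_aux (a+b) b a (by omega) h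
    rw [Nat.add_comm b a] at this
    rw [min_eq_right h]; omega

lemma Ecal_le_of_le (j r : ℕ) (h : r ≤ 2^j) : 2 * Ecal r ≤ j * r := by
  induction j generalizing r with
  | zero =>
    interval_cases r
    · simp [Ecal_zero]
    · simp [show Ecal 1 = 0 by rw [show (1:ℕ) = 0 + 1 by rfl, Ecal_succ, Ecal_zero]; simp [show dsum 0 = 0 from by
        have := dsum_reflect 0 0 (by norm_num); simpa using this]]
  | succ j ih =>
    by_cases hr : r ≤ 2^j
    · have h1 := ih r hr
      have hj1 : (j+1)*r = j*r + r := by ring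
      omega
    · push_neg at hr
      set r' := r - 2^j with hr'
      have h2 : 2^(j+1) = 2*2^j := by ring
      have hr'2 : r' ≤ 2^j := by omega
      have hEr : Ecal r = Ecal (2^j) + r' + Ecal r' := by
        have : r = 2^j + r' := by omega
        rw [this, Ecal_pow_add j r' hr'2]
      have hih := ih r' hr'2
      have hEp := Ecal_pow j
      have hmul : (j+1)*r = j*2^j + j*r' + 2^j + r' := by
        have : r = 2^j + r' := by omega
        rw [this]; ring
      omega

-- counting

def flipAt {n : ℕ} (i : Fin n) (x : Fin n → Bool) : Fin n → Bool :=
  Function.update x i (!x i)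

lemma flipAt_apply_same {n : ℕ} (i : Fin n) (x : Fin n → Bool) :
    flipAt i x i = !x i := by simp [flipAt]

lemma flipAt_apply_ne {n : ℕ} (i j : Fin n) (x : Fin n → Bool) (h : j ≠ i) :
    flipAt i x j = x j := by simp [flipAt, Function.update_of_ne h]

lemma flipAt_flipAt {n : ℕ} (i : Fin n) (x : Fin n → Bool) :
    flipAt i (flipAt i x) = x := by
  funext j
  by_cases h : j = i
  · subst h; simp [flipAt]
  · simp [flipAt, Function.update_of_ne h]

lemma cubeEdge_flipAt {n : ℕ} (i : Fin n) (x : Fin n → Bool) :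
    cubeEdge x (flipAt i x) := by
  unfold cubeEdge
  have : (Finset.univ.filter (fun j => x j ≠ flipAt i x j)) = {i} := by
    ext j
    simp only [Finset.mem_filter, Finset.mem_univ, true_and, Finset.mem_singleton]
    constructor
    · intro h
      by_contra hj
      exact h (flipAt_apply_ne i j x hj).symm
    · intro h
      rw [h, flipAt_apply_same]
      cases x i <;> simp
  rw [this, Finset.card_singleton]

lemma cubeEdge_eq_flipAt {n : ℕ} {u v : Fin n → Bool} (h : cubeEdge u v) {i : Fin n}
    (hi : u i ≠ v i) : v = flipAt i u := by
  unfold cubeEdge at h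
  have hmem : i ∈ Finset.univ.filter (fun j => u j ≠ v j) := by
    simp only [Finset.mem_filter, Finset.mem_univ, true_and]; exact hi
  obtain ⟨a, ha⟩ := Finset.card_eq_one.mp h
  rw [ha, Finset.mem_singleton] at hmem
  rw [← hmem] at ha
  funext j
  by_cases hj : j = i
  · subst hj
    rw [flipAt_apply_same]
    cases hu : u j <;> cases hv : v j <;> simp_all
  · have : j ∉ Finset.univ.filter (fun j => u j ≠ v j) := by
      rw [ha]; simp [hj]
    simp only [Finset.mem_filter, Finset.mem_univ, true_and, not_not] at this
    rw [flipAt_apply_ne i j u hj, this]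

lemma cubeEdge_comm {n : ℕ} {u v : Fin n → Bool} (h : cubeEdge u v) : cubeEdge v u := by
  unfold cubeEdge at *
  have : (Finset.univ.filter (fun i => v i ≠ u i)) = (Finset.univ.filter (fun i => u i ≠ v i)) := by
    apply Finset.filter_congr
    intro i _
    simp [ne_comm]
  rw [this]; exact h

/-- boundary count in direction i -/
def dCnt {n : ℕ} (S : Finset (Fin n → Bool)) (i : Fin n) : ℕ :=
  (Finset.univ.filter (fun x => x ∈ S ∧ flipAt i x ∉ S)).card

lemma edgeBoundary_eq_sum_dCnt {n : ℕ} (S : Finset (Fin n → Bool)) :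
    edgeBoundary n S = ∑ i : Fin n, dCnt S i := by
  unfold edgeBoundary
  set P := Finset.univ.filter (fun p : (Fin n → Bool) × (Fin n → Bool) =>
    p.1 ∈ S ∧ p.2 ∉ S ∧ cubeEdge p.1 p.2) with hP
  have step1 : P.card = ∑ p ∈ P, (Finset.univ.filter (fun i => p.1 i ≠ p.2 i)).card := by
    rw [Finset.card_eq_sum_ones]
    apply Finset.sum_congr rfl
    intro p hp
    rw [hP, Finset.mem_filter] at hp
    exact (hp.2.2.2).symm
  rw [step1]
  have step2 : ∀ p ∈ P, (Finset.univ.filter (fun i => p.1 i ≠ p.2 i)).card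
      = ∑ i : Fin n, if p.1 i ≠ p.2 i then 1 else 0 := by
    intro p _
    rw [Finset.card_filter]
  rw [Finset.sum_congr rfl step2, Finset.sum_comm]
  apply Finset.sum_congr rfl
  intro i _
  rw [← Finset.card_filter]  -- now card (P.filter (differ at i)) = dCnt S i
  unfold dCnt
  apply Finset.card_nbij' (fun p => p.1) (fun x => (x, flipAt i x))
  · intro p hp
    rw [Finset.mem_coe, Finset.mem_filter] at hp
    obtain ⟨hpP, hdiff⟩ := hp
    rw [hP, Finset.mem_filter] at hpP
    obtain ⟨-, h1, h2, h3⟩ := hpP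
    have : p.2 = flipAt i p.1 := cubeEdge_eq_flipAt h3 hdiff
    simp only [Finset.mem_coe, Finset.mem_filter, Finset.mem_univ, true_and]
    exact ⟨h1, by rw [← this]; exact h2⟩
  · intro x hx
    rw [Finset.mem_coe, Finset.mem_filter] at hx
    obtain ⟨-, h1, h2⟩ := hx
    rw [Finset.mem_coe, Finset.mem_filter]
    constructor
    · rw [hP, Finset.mem_filter]
      exact ⟨Finset.mem_univ _, h1, h2, cubeEdge_flipAt i x⟩
    · show x i ≠ flipAt i x i
      rw [flipAt_apply_same]
      cases x i <;> simp
  · intro p hp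
    rw [Finset.mem_coe, Finset.mem_filter] at hp
    obtain ⟨hpP, hdiff⟩ := hp
    rw [hP, Finset.mem_filter] at hpP
    obtain ⟨-, h1, h2, h3⟩ := hpP
    have : p.2 = flipAt i p.1 := cubeEdge_eq_flipAt h3 hdiff
    beta_reduce; rw [← this]
  · intro x _
    rfl

/-- number of elements of S in halfplane (i, a) -/
def sCnt {n : ℕ} (S : Finset (Fin n → Bool)) (i : Fin n) (a : Bool) : ℕ :=
  (Finset.univ.filter (fun x => x i = a ∧ x ∈ S)).card

lemma filtU_congr {α : Type*} [Fintype α] (p q : α → Prop)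
    [DecidablePred p] [DecidablePred q] (h : ∀ x, p x ↔ q x) :
    Finset.univ.filter p = Finset.univ.filter q := by
  ext x
  simp only [Finset.mem_filter, Finset.mem_univ, true_and]
  exact h x

lemma sCnt_eq_inter {n : ℕ} (S : Finset (Fin n → Bool)) (i : Fin n) (a : Bool) :
    (S ∩ halfPlane n i a).card = sCnt S i a := by
  unfold sCnt halfPlane
  congr 1
  ext x
  simp only [Finset.mem_inter, Finset.mem_filter, Finset.mem_univ, true_and]
  tauto

lemma sCnt_filter {n : ℕ} (S : Finset (Fin n → Bool)) (i : Fin n) (a : Bool) :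
    sCnt S i a = (S.filter (fun x => x i = a)).card := by
  unfold sCnt
  congr 1
  ext x
  simp only [Finset.mem_filter, Finset.mem_univ, true_and]
  tauto

lemma sCnt_add {n : ℕ} (S : Finset (Fin n → Bool)) (i : Fin n) :
    sCnt S i false + sCnt S i true = S.card := by
  rw [sCnt_filter, sCnt_filter]
  rw [← Finset.card_filter_add_card_filter_not (s := S) (p := fun x => x i = false)]
  congr 2
  ext x
  cases h : x i <;> simp [h]

/-- crossing count in direction i starting in halfplane a -/
def crossCnt {n : ℕ} (S : Finset (Fin n → Bool)) (i : Fin n) (a : Bool) : ℕ :=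
  (Finset.univ.filter (fun x => x i = a ∧ x ∈ S ∧ flipAt i x ∉ S)).card

/-- staying count -/
def stayCnt {n : ℕ} (S : Finset (Fin n → Bool)) (i : Fin n) (a : Bool) : ℕ :=
  (Finset.univ.filter (fun x => x i = a ∧ x ∈ S ∧ flipAt i x ∈ S)).card

lemma filter_split_card {α : Type*} [Fintype α]
    (p q : α → Prop) [DecidablePred p] [DecidablePred q] :
    (Finset.univ.filter p).card
      = (Finset.univ.filter (fun x => p x ∧ q x)).card
        + (Finset.univ.filter (fun x => p x ∧ ¬ q x)).card := by
  rw [← Finset.card_filter_add_card_filter_not (s := Finset.univ.filter p) (p := q)]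
  rw [Finset.filter_filter, Finset.filter_filter]

lemma sCnt_split {n : ℕ} (S : Finset (Fin n → Bool)) (i : Fin n) (a : Bool) :
    sCnt S i a = stayCnt S i a + crossCnt S i a := by
  unfold sCnt stayCnt crossCnt
  rw [filter_split_card (fun x => x i = a ∧ x ∈ S) (fun x => flipAt i x ∈ S)]
  congr 1
  · exact congrArg Finset.card (filtU_congr _ _ (fun x => by tauto))
  · exact congrArg Finset.card (filtU_congr _ _ (fun x => by tauto))

lemma dCnt_split {n : ℕ} (S : Finset (Fin n → Bool)) (i : Fin n) :
    dCnt S i = crossCnt S i false + crossCnt S i true := by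
  unfold dCnt crossCnt
  rw [filter_split_card (fun x => x ∈ S ∧ flipAt i x ∉ S) (fun x => x i = false)]
  congr 1
  · exact congrArg Finset.card (filtU_congr _ _ (fun x => by tauto))
  · refine congrArg Finset.card (filtU_congr _ _ (fun x => ?_))
    constructor
    · rintro ⟨⟨h1, h2⟩, h3⟩
      refine ⟨?_, h1, h2⟩
      revert h3; cases x i <;> simp
    · rintro ⟨h1, h2, h3⟩
      exact ⟨⟨h2, h3⟩, by rw [h1]; simp⟩

lemma stayCnt_symm {n : ℕ} (S : Finset (Fin n → Bool)) (i : Fin n) :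
    stayCnt S i false = stayCnt S i true := by
  unfold stayCnt
  apply Finset.card_nbij' (flipAt i) (flipAt i)
  · intro x hx
    simp only [Finset.mem_coe, Finset.mem_filter, Finset.mem_univ, true_and] at hx ⊢
    obtain ⟨h1, h2, h3⟩ := hx
    rw [flipAt_flipAt]
    exact ⟨by rw [flipAt_apply_same, h1]; rfl, h3, h2⟩
  · intro x hx
    simp only [Finset.mem_coe, Finset.mem_filter, Finset.mem_univ, true_and] at hx ⊢
    obtain ⟨h1, h2, h3⟩ := hx
    rw [flipAt_flipAt]
    exact ⟨by rw [flipAt_apply_same, h1]; rfl, h3, h2⟩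
  · intro x _; exact flipAt_flipAt i x
  · intro x _; exact flipAt_flipAt i x

/-- the key balance identity: s_f + cross_t = s_t + cross_f -/
lemma sCnt_crossCnt_balance {n : ℕ} (S : Finset (Fin n → Bool)) (i : Fin n) :
    sCnt S i false + crossCnt S i true = sCnt S i true + crossCnt S i false := by
  rw [sCnt_split, sCnt_split, stayCnt_symm]
  omega

lemma edgeBoundary_compl {n : ℕ} (S : Finset (Fin n → Bool)) :
    edgeBoundary n (Finset.univ \ S) = edgeBoundary n S := by
  unfold edgeBoundary
  apply Finset.card_nbij' (fun p => (p.2, p.1)) (fun p => (p.2, p.1))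
  · intro p hp
    simp only [Finset.mem_coe, Finset.mem_filter, Finset.mem_univ, true_and, Finset.mem_sdiff, not_and, not_not] at hp ⊢
    obtain ⟨h1, h2, h3⟩ := hp
    refine ⟨?_, ?_, cubeEdge_comm h3⟩ <;> tauto
  · intro p hp
    simp only [Finset.mem_coe, Finset.mem_filter, Finset.mem_univ, true_and, Finset.mem_sdiff, not_and, not_not] at hp ⊢
    obtain ⟨h1, h2, h3⟩ := hp
    refine ⟨?_, ?_, cubeEdge_comm h3⟩ <;> tauto
  · intro p _; rfl
  · intro p _; rfl

lemma card_univ_bool {n : ℕ} : (Finset.univ : Finset (Fin n → Bool)).card = 2^n := by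
  rw [Finset.card_univ]
  simp [Fintype.card_fun]

-- ============ slicing section ============

lemma insertNth_flipAt_same {m : ℕ} (i : Fin (m+1)) (a : Bool) (x : Fin m → Bool) :
    flipAt i (i.insertNth a x) = i.insertNth (!a) x := by
  funext j
  by_cases hj : j = i
  · subst hj
    rw [flipAt_apply_same, Fin.insertNth_apply_same, Fin.insertNth_apply_same]
  · obtain ⟨k, rfl⟩ := Fin.exists_succAbove_eq hj
    rw [flipAt_apply_ne _ _ _ (Fin.succAbove_ne i k),
      Fin.insertNth_apply_succAbove, Fin.insertNth_apply_succAbove]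

lemma insertNth_flipAt_succAbove {m : ℕ} (i : Fin (m+1)) (k : Fin m) (a : Bool)
    (x : Fin m → Bool) :
    flipAt (i.succAbove k) (i.insertNth a x) = i.insertNth a (flipAt k x) := by
  funext j
  by_cases hj : j = i
  · rw [hj]
    rw [flipAt_apply_ne _ _ _ (Fin.succAbove_ne i k).symm,
      Fin.insertNth_apply_same, Fin.insertNth_apply_same]
  · obtain ⟨k', rfl⟩ := Fin.exists_succAbove_eq hj
    by_cases hk : k' = k
    · subst hk
      rw [flipAt_apply_same, Fin.insertNth_apply_succAbove, Fin.insertNth_apply_succAbove,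
        flipAt_apply_same]
    · rw [flipAt_apply_ne _ _ _ (fun hc => hk (Fin.succAbove_right_injective hc)),
        Fin.insertNth_apply_succAbove, Fin.insertNth_apply_succAbove,
        flipAt_apply_ne _ _ _ hk]

lemma gPre_card {m : ℕ} (i : Fin (m+1)) (a : Bool) (S : Finset (Fin (m+1) → Bool)) :
    (gPre m i a S).card = sCnt S i a := by
  unfold gPre sCnt
  apply Finset.card_nbij' (fun x => (i.insertNth a x : Fin (m+1) → Bool)) (fun u => i.removeNth u)
  · intro x hx
    simp only [Finset.mem_coe, Finset.mem_filter, Finset.mem_univ, true_and] at hx ⊢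
    exact ⟨by simp, hx⟩
  · intro u hu
    simp only [Finset.mem_coe, Finset.mem_filter, Finset.mem_univ, true_and] at hu ⊢
    rw [← hu.1, Fin.insertNth_self_removeNth]
    exact hu.2
  · intro x _
    simp
  · intro u hu
    simp only [Finset.mem_coe, Finset.mem_filter, Finset.mem_univ, true_and] at hu
    beta_reduce; rw [← hu.1, Fin.insertNth_self_removeNth]

lemma crossCnt_gPre {m : ℕ} (i : Fin (m+1)) (a : Bool) (S : Finset (Fin (m+1) → Bool)) :
    crossCnt S i a = ((gPre m i a S) \ (gPre m i (!a) S)).card := by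
  unfold crossCnt
  apply Finset.card_nbij' (fun u => i.removeNth u) (fun x => i.insertNth a x)
  · intro u hu
    simp only [Finset.mem_coe, Finset.mem_filter, Finset.mem_univ, true_and] at hu
    obtain ⟨h1, h2, h3⟩ := hu
    rw [Finset.mem_coe, Finset.mem_sdiff]
    unfold gPre
    simp only [Finset.mem_filter, Finset.mem_univ, true_and]
    constructor
    · rw [← h1, Fin.insertNth_self_removeNth]; exact h2
    · intro hc
      apply h3
      have : flipAt i u = i.insertNth (!a) (i.removeNth u) := by
        conv_lhs => rw [← Fin.insertNth_self_removeNth i u, h1]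
        exact insertNth_flipAt_same i a (i.removeNth u)
      rw [this]; exact hc
  · intro x hx
    rw [Finset.mem_coe, Finset.mem_sdiff] at hx
    unfold gPre at hx
    simp only [Finset.mem_filter, Finset.mem_univ, true_and] at hx
    obtain ⟨h1, h2⟩ := hx
    simp only [Finset.mem_coe, Finset.mem_filter, Finset.mem_univ, true_and]
    refine ⟨by simp, h1, ?_⟩
    rw [insertNth_flipAt_same]
    exact h2
  · intro u hu
    simp only [Finset.mem_coe, Finset.mem_filter, Finset.mem_univ, true_and] at hu
    beta_reduce; rw [← hu.1, Fin.insertNth_self_removeNth]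
  · intro x _
    simp

lemma dCnt_gPre_same {m : ℕ} (i : Fin (m+1)) (S : Finset (Fin (m+1) → Bool)) :
    dCnt S i = ((gPre m i false S) \ (gPre m i true S)).card
      + ((gPre m i true S) \ (gPre m i false S)).card := by
  rw [dCnt_split, crossCnt_gPre, crossCnt_gPre]
  rfl

lemma dCnt_gPre_succAbove {m : ℕ} (i : Fin (m+1)) (k : Fin m)
    (S : Finset (Fin (m+1) → Bool)) :
    dCnt S (i.succAbove k) = dCnt (gPre m i false S) k + dCnt (gPre m i true S) k := by
  unfold dCnt
  rw [filter_split_card (fun u => u ∈ S ∧ flipAt (i.succAbove k) u ∉ S) (fun u => u i = false)]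
  congr 1
  · -- slice at false
    apply Finset.card_nbij' (fun u => i.removeNth u) (fun x => i.insertNth false x)
    · intro u hu
      simp only [Finset.mem_coe, Finset.mem_filter, Finset.mem_univ, true_and] at hu ⊢
      obtain ⟨⟨h1, h2⟩, h3⟩ := hu
      unfold gPre
      simp only [Finset.mem_filter, Finset.mem_univ, true_and]
      constructor
      · rw [← h3, Fin.insertNth_self_removeNth]; exact h1
      · intro hc
        apply h2
        have : flipAt (i.succAbove k) u = i.insertNth false (flipAt k (i.removeNth u)) := by
          conv_lhs => rw [← Fin.insertNth_self_removeNth i u, h3]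
          exact insertNth_flipAt_succAbove i k false (i.removeNth u)
        rw [this]; exact hc
    · intro x hx
      simp only [Finset.mem_coe, Finset.mem_filter, Finset.mem_univ, true_and] at hx ⊢
      unfold gPre at hx
      simp only [Finset.mem_filter, Finset.mem_univ, true_and] at hx
      obtain ⟨h1, h2⟩ := hx
      refine ⟨⟨h1, ?_⟩, by simp⟩
      rw [insertNth_flipAt_succAbove]
      exact h2
    · intro u hu
      simp only [Finset.mem_coe, Finset.mem_filter, Finset.mem_univ, true_and] at hu
      beta_reduce; rw [← hu.2, Fin.insertNth_self_removeNth]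
    · intro x _
      simp
  · -- slice at true
    apply Finset.card_nbij' (fun u => i.removeNth u) (fun x => i.insertNth true x)
    · intro u hu
      simp only [Finset.mem_coe, Finset.mem_filter, Finset.mem_univ, true_and] at hu ⊢
      obtain ⟨⟨h1, h2⟩, h3⟩ := hu
      have h3' : u i = true := by revert h3; cases u i <;> simp
      unfold gPre
      simp only [Finset.mem_filter, Finset.mem_univ, true_and]
      constructor
      · rw [← h3', Fin.insertNth_self_removeNth]; exact h1
      · intro hc
        apply h2
        have : flipAt (i.succAbove k) u = i.insertNth true (flipAt k (i.removeNth u)) := by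
          conv_lhs => rw [← Fin.insertNth_self_removeNth i u, h3']
          exact insertNth_flipAt_succAbove i k true (i.removeNth u)
        rw [this]; exact hc
    · intro x hx
      simp only [Finset.mem_coe, Finset.mem_filter, Finset.mem_univ, true_and] at hx ⊢
      unfold gPre at hx
      simp only [Finset.mem_filter, Finset.mem_univ, true_and] at hx
      obtain ⟨h1, h2⟩ := hx
      refine ⟨⟨h1, ?_⟩, by rw [Fin.insertNth_apply_same]; simp⟩
      rw [insertNth_flipAt_succAbove]
      exact h2
    · intro u hu
      simp only [Finset.mem_coe, Finset.mem_filter, Finset.mem_univ, true_and] at hu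
      have h3' : u i = true := by revert hu; cases u i <;> simp
      beta_reduce; rw [← h3', Fin.insertNth_self_removeNth]
    · intro x _
      simp

lemma edgeBoundary_slice {m : ℕ} (i : Fin (m+1)) (S : Finset (Fin (m+1) → Bool)) :
    edgeBoundary (m+1) S
      = edgeBoundary m (gPre m i false S) + edgeBoundary m (gPre m i true S)
        + (((gPre m i false S) \ (gPre m i true S)).card
           + ((gPre m i true S) \ (gPre m i false S)).card) := by
  rw [edgeBoundary_eq_sum_dCnt, Fin.sum_univ_succAbove _ i,
    edgeBoundary_eq_sum_dCnt, edgeBoundary_eq_sum_dCnt, dCnt_gPre_same]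
  have : ∀ k : Fin m, dCnt S (i.succAbove k)
      = dCnt (gPre m i false S) k + dCnt (gPre m i true S) k :=
    fun k => dCnt_gPre_succAbove i k S
  rw [Finset.sum_congr rfl (fun k _ => this k), Finset.sum_add_distrib]
  ring


/-- Harper's edge-isoperimetric inequality (lower-bound form):
`m * |X| ≤ θ(X) + 2 E(|X|)`. -/
theorem harper_bound : ∀ (m : ℕ) (X : Finset (Fin m → Bool)),
    m * X.card ≤ edgeBoundary m X + 2 * Ecal X.card := by
  intro m
  induction m with
  | zero => intro X; simp
  | succ m ih =>
    intro X
    set A := gPre m 0 false X with hA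
    set B := gPre m 0 true X with hB
    have hcard : A.card + B.card = X.card := by
      rw [hA, hB, gPre_card, gPre_card, sCnt_add]
    have hslice := edgeBoundary_slice (0 : Fin (m+1)) X
    rw [← hA, ← hB] at hslice
    have hIA := ih A
    have hIB := ih B
    have hsup := Ecal_superadd A.card B.card
    rw [hcard] at hsup
    -- cross term bounds
    have hAB : A.card - B.card ≤ (A \ B).card := le_card_sdiff B A
    have hBA : B.card - A.card ≤ (B \ A).card := le_card_sdiff A B
    have hmin : A.card + B.card ≤ (A \ B).card + (B \ A).card + 2 * min A.card B.card := by
      rcases le_total A.card B.card with h | h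
      · rw [min_eq_left h]; omega
      · rw [min_eq_right h]; omega
    have hexp : (m+1) * X.card = m * A.card + m * B.card + (A.card + B.card) := by
      rw [← hcard]; ring
    omega

-- ============ Fourier section (over ℤ) ============

/-- ±1 indicator of S -/
def fS {n : ℕ} (S : Finset (Fin n → Bool)) (x : Fin n → Bool) : ℤ :=
  if x ∈ S then 1 else -1

/-- character associated to T -/
def chi {n : ℕ} (T : Finset (Fin n)) (x : Fin n → Bool) : ℤ :=
  ∏ i ∈ T, (if x i then -1 else 1)

/-- Fourier coefficient (times 2^n) -/
def fcoef {n : ℕ} (S : Finset (Fin n → Bool)) (T : Finset (Fin n)) : ℤ :=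
  ∑ x : Fin n → Bool, fS S x * chi T x

lemma chi_mul_chi {n : ℕ} (T : Finset (Fin n)) (x y : Fin n → Bool) :
    chi T x * chi T y = ∏ i ∈ T, (if x i = y i then 1 else (-1 : ℤ)) := by
  unfold chi
  rw [← Finset.prod_mul_distrib]
  apply Finset.prod_congr rfl
  intro i _
  cases hx : x i <;> cases hy : y i <;> simp

lemma sum_chi_chi {n : ℕ} (x y : Fin n → Bool) :
    ∑ T : Finset (Fin n), chi T x * chi T y = if x = y then (2^n : ℤ) else 0 := by
  have h1 : ∀ T : Finset (Fin n), chi T x * chi T y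
      = ∏ i ∈ T, (if x i = y i then 1 else (-1 : ℤ)) := fun T => chi_mul_chi T x y
  rw [Finset.sum_congr rfl (fun T _ => h1 T)]
  have h2 : ∑ T : Finset (Fin n), ∏ i ∈ T, (if x i = y i then 1 else (-1 : ℤ))
      = ∏ i : Fin n, ((if x i = y i then 1 else (-1 : ℤ)) + 1) := by
    rw [Finset.prod_add]
    rw [← Finset.powerset_univ]
    apply Finset.sum_congr rfl
    intro T _
    simp
  rw [h2]
  by_cases hxy : x = y
  · subst hxy
    simp [Finset.prod_const]
  · have : ∃ i, x i ≠ y i := by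
      by_contra hc
      push_neg at hc
      exact hxy (funext hc)
    obtain ⟨i, hi⟩ := this
    rw [if_neg hxy]
    apply Finset.prod_eq_zero (Finset.mem_univ i)
    rw [if_neg hi]
    norm_num

/-- Parseval (unnormalized) -/
lemma parseval {n : ℕ} (g : (Fin n → Bool) → ℤ) :
    ∑ T : Finset (Fin n), (∑ x : Fin n → Bool, g x * chi T x)^2
      = 2^n * ∑ x : Fin n → Bool, (g x)^2 := by
  have step1 : ∀ T : Finset (Fin n), (∑ x : Fin n → Bool, g x * chi T x)^2
      = ∑ x : Fin n → Bool, ∑ y : Fin n → Bool, g x * g y * (chi T x * chi T y) := by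
    intro T
    rw [sq, Finset.sum_mul_sum]
    apply Finset.sum_congr rfl
    intro x _
    apply Finset.sum_congr rfl
    intro y _
    ring
  rw [Finset.sum_congr rfl (fun T _ => step1 T)]
  rw [Finset.sum_comm]
  have step2 : ∀ x : Fin n → Bool,
      ∑ y : Fin n → Bool, ∑ T : Finset (Fin n), g x * g y * (chi T x * chi T y)
        = (g x)^2 * 2^n := by
    intro x
    have inner : ∀ y : Fin n → Bool,
        ∑ T : Finset (Fin n), g x * g y * (chi T x * chi T y)
          = g x * g y * (if x = y then (2^n : ℤ) else 0) := by
      intro y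
      rw [← Finset.mul_sum, sum_chi_chi]
    rw [Finset.sum_congr rfl (fun y _ => inner y)]
    have : ∀ y : Fin n → Bool, g x * g y * (if x = y then (2^n : ℤ) else 0)
        = if y = x then g x * g y * 2^n else 0 := by
      intro y
      by_cases h : x = y
      · rw [if_pos h, if_pos h.symm]
      · rw [if_neg h, if_neg (fun hc => h hc.symm), mul_zero]
    rw [Finset.sum_congr rfl (fun y _ => this y)]
    rw [Finset.sum_ite_eq' Finset.univ x (fun y => g x * g y * 2^n)]
    rw [if_pos (Finset.mem_univ x)]
    ring
  have swap2 : ∑ x : Fin n → Bool, ∑ T : Finset (Fin n),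
      ∑ y : Fin n → Bool, g x * g y * (chi T x * chi T y)
      = ∑ x : Fin n → Bool, ∑ y : Fin n → Bool,
        ∑ T : Finset (Fin n), g x * g y * (chi T x * chi T y) := by
    apply Finset.sum_congr rfl
    intro x _
    exact Finset.sum_comm
  rw [swap2, Finset.sum_congr rfl (fun x _ => step2 x), ← Finset.sum_mul]
  rw [mul_comm]

lemma chi_empty {n : ℕ} (x : Fin n → Bool) : chi ∅ x = 1 := by
  simp [chi]

lemma filter_mem_univ_eq {n : ℕ} (S : Finset (Fin n → Bool)) :
    Finset.univ.filter (fun x => x ∈ S) = S := by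
  ext x; simp

lemma fcoef_empty {n : ℕ} (S : Finset (Fin n → Bool)) (hcard : 2 * S.card = 2^n) :
    fcoef S ∅ = 0 := by
  unfold fcoef
  have h1 : ∀ x : Fin n → Bool, fS S x * chi ∅ x = fS S x := by
    intro x; rw [chi_empty, mul_one]
  rw [Finset.sum_congr rfl (fun x _ => h1 x)]
  unfold fS
  rw [Finset.sum_ite, Finset.sum_const, Finset.sum_const]
  rw [Finset.filter_mem_eq_inter, Finset.univ_inter]
  have h2 : Finset.univ.filter (fun x : Fin n → Bool => x ∉ S) = Finset.univ \ S := by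
    ext x; simp
  rw [h2, Finset.card_sdiff_of_subset (Finset.subset_univ S), card_univ_bool]
  have hle : S.card ≤ 2^n := by
    calc S.card ≤ (Finset.univ : Finset (Fin n → Bool)).card :=
          Finset.card_le_card (Finset.subset_univ S)
      _ = 2^n := card_univ_bool
  have hcard' : (2:ℤ) * S.card = 2^n := by exact_mod_cast hcard
  simp only [nsmul_eq_mul, mul_one, mul_neg_one]
  push_cast [hle]
  linarith

lemma chi_flipAt {n : ℕ} (T : Finset (Fin n)) (i : Fin n) (x : Fin n → Bool) :
    chi T (flipAt i x) = (if i ∈ T then -1 else 1) * chi T x := by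
  unfold chi
  by_cases hiT : i ∈ T
  · rw [if_pos hiT]
    rw [← Finset.mul_prod_erase T _ hiT, ← Finset.mul_prod_erase T (fun j => if x j then (-1:ℤ) else 1) hiT]
    have h1 : (if flipAt i x i then (-1:ℤ) else 1) = -(if x i then (-1:ℤ) else 1) := by
      rw [flipAt_apply_same]
      cases x i <;> simp
    have h2 : ∏ j ∈ T.erase i, (if flipAt i x j then (-1:ℤ) else 1)
        = ∏ j ∈ T.erase i, (if x j then (-1:ℤ) else 1) := by
      apply Finset.prod_congr rfl
      intro j hj
      rw [flipAt_apply_ne i j x (Finset.ne_of_mem_erase hj)]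
    rw [h1, h2]
    ring
  · rw [if_neg hiT, one_mul]
    apply Finset.prod_congr rfl
    intro j hj
    rw [flipAt_apply_ne i j x (fun hc => hiT (hc ▸ hj))]

lemma sum_flip_chi {n : ℕ} (S : Finset (Fin n → Bool)) (i : Fin n) (T : Finset (Fin n)) :
    ∑ x : Fin n → Bool, (fS S x - fS S (flipAt i x)) * chi T x
      = if i ∈ T then 2 * fcoef S T else 0 := by
  have hsplit : ∑ x : Fin n → Bool, (fS S x - fS S (flipAt i x)) * chi T x
      = fcoef S T - ∑ x : Fin n → Bool, fS S (flipAt i x) * chi T x := by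
    unfold fcoef
    rw [← Finset.sum_sub_distrib]
    apply Finset.sum_congr rfl
    intro x _
    ring
  have hre : ∑ x : Fin n → Bool, fS S (flipAt i x) * chi T x
      = ∑ y : Fin n → Bool, fS S y * chi T (flipAt i y) := by
    apply Finset.sum_nbij' (flipAt i) (flipAt i)
    · intro a _; exact Finset.mem_univ _
    · intro a _; exact Finset.mem_univ _
    · intro a _; exact flipAt_flipAt i a
    · intro a _; exact flipAt_flipAt i a
    · intro a _; rw [flipAt_flipAt]
  have hchi : ∀ y : Fin n → Bool, fS S y * chi T (flipAt i y)
      = (if i ∈ T then -1 else 1) * (fS S y * chi T y) := by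
    intro y
    rw [chi_flipAt]
    ring
  rw [hsplit, hre, Finset.sum_congr rfl (fun y _ => hchi y), ← Finset.mul_sum]
  by_cases hiT : i ∈ T
  · rw [if_pos hiT, if_pos hiT]
    unfold fcoef
    ring
  · rw [if_neg hiT, if_neg hiT]
    unfold fcoef
    ring

lemma dCnt_symm_card {n : ℕ} (S : Finset (Fin n → Bool)) (i : Fin n) :
    (Finset.univ.filter (fun x => x ∉ S ∧ flipAt i x ∈ S)).card = dCnt S i := by
  unfold dCnt
  apply Finset.card_nbij' (flipAt i) (flipAt i)
  · intro x hx
    simp only [Finset.mem_coe, Finset.mem_filter, Finset.mem_univ, true_and] at hx ⊢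
    rw [flipAt_flipAt]
    exact ⟨hx.2, hx.1⟩
  · intro x hx
    simp only [Finset.mem_coe, Finset.mem_filter, Finset.mem_univ, true_and] at hx ⊢
    rw [flipAt_flipAt]
    exact ⟨hx.2, hx.1⟩
  · intro x _; exact flipAt_flipAt i x
  · intro x _; exact flipAt_flipAt i x

lemma sum_sq_flip {n : ℕ} (S : Finset (Fin n → Bool)) (i : Fin n) :
    ∑ x : Fin n → Bool, (fS S x - fS S (flipAt i x))^2 = 8 * (dCnt S i : ℤ) := by
  have hpt : ∀ x : Fin n → Bool, (fS S x - fS S (flipAt i x))^2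
      = (if x ∈ S ∧ flipAt i x ∉ S then (4:ℤ) else 0)
        + (if x ∉ S ∧ flipAt i x ∈ S then (4:ℤ) else 0) := by
    intro x
    unfold fS
    by_cases h1 : x ∈ S <;> by_cases h2 : flipAt i x ∈ S <;> simp [h1, h2] <;> norm_num
  rw [Finset.sum_congr rfl (fun x _ => hpt x), Finset.sum_add_distrib,
    ← Finset.sum_filter, ← Finset.sum_filter, Finset.sum_const, Finset.sum_const]
  simp only [nsmul_eq_mul]
  have e1 : (Finset.univ.filter (fun x : Fin n → Bool => x ∈ S ∧ flipAt i x ∉ S)).card = dCnt S i := rfl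
  rw [e1, dCnt_symm_card]
  push_cast
  ring

lemma influence_sum {n : ℕ} (S : Finset (Fin n → Bool)) (i : Fin n) :
    ∑ T : Finset (Fin n), (if i ∈ T then (fcoef S T)^2 else 0)
      = 2^(n+1) * (dCnt S i : ℤ) := by
  have hp := parseval (fun x => fS S x - fS S (flipAt i x))
  have hrw : ∀ T : Finset (Fin n),
      (∑ x : Fin n → Bool, (fS S x - fS S (flipAt i x)) * chi T x)^2
        = if i ∈ T then 4 * (fcoef S T)^2 else 0 := by
    intro T
    rw [sum_flip_chi S i T]
    by_cases hiT : i ∈ T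
    · rw [if_pos hiT, if_pos hiT]; ring
    · rw [if_neg hiT, if_neg hiT]; ring
  rw [Finset.sum_congr rfl (fun T _ => hrw T), sum_sq_flip] at hp
  have h4 : ∀ T : Finset (Fin n), (if i ∈ T then 4 * (fcoef S T)^2 else 0)
      = 4 * (if i ∈ T then (fcoef S T)^2 else 0) := by
    intro T; split <;> ring
  rw [Finset.sum_congr rfl (fun T _ => h4 T), ← Finset.mul_sum] at hp
  have : (4:ℤ) * (2^(n+1) * (dCnt S i : ℤ)) = 2^n * (8 * (dCnt S i : ℤ)) := by ring
  have h4ne : (4:ℤ) ≠ 0 := by norm_num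
  apply mul_left_cancel₀ h4ne
  rw [hp, this]

lemma weighted_sum {n : ℕ} (S : Finset (Fin n → Bool)) :
    ∑ T : Finset (Fin n), (T.card : ℤ) * (fcoef S T)^2
      = 2^(n+1) * (edgeBoundary n S : ℤ) := by
  have hcard : ∀ T : Finset (Fin n), (T.card : ℤ) * (fcoef S T)^2
      = ∑ i : Fin n, (if i ∈ T then (fcoef S T)^2 else 0) := by
    intro T
    rw [Finset.sum_ite_mem, Finset.univ_inter, Finset.sum_const, nsmul_eq_mul]
  rw [Finset.sum_congr rfl (fun T _ => hcard T), Finset.sum_comm]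
  rw [Finset.sum_congr rfl (fun i (_ : i ∈ Finset.univ) => influence_sum S i)]
  rw [← Finset.mul_sum, edgeBoundary_eq_sum_dCnt]
  push_cast
  ring

lemma half_card_eq {n : ℕ} (i : Fin n) :
    (Finset.univ.filter (fun x : Fin n → Bool => x i = false)).card
      = (Finset.univ.filter (fun x : Fin n → Bool => x i = true)).card := by
  apply Finset.card_nbij' (flipAt i) (flipAt i)
  · intro x hx
    simp only [Finset.mem_coe, Finset.mem_filter, Finset.mem_univ, true_and] at hx ⊢
    rw [flipAt_apply_same, hx]; rfl
  · intro x hx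
    simp only [Finset.mem_coe, Finset.mem_filter, Finset.mem_univ, true_and] at hx ⊢
    rw [flipAt_apply_same, hx]; rfl
  · intro x _; exact flipAt_flipAt i x
  · intro x _; exact flipAt_flipAt i x

lemma fcoef_singleton {n : ℕ} (S : Finset (Fin n → Bool)) (i : Fin n) :
    fcoef S {i} = 2 * ((sCnt S i false : ℤ) - (sCnt S i true : ℤ)) := by
  unfold fcoef
  have hpt : ∀ x : Fin n → Bool, fS S x * chi {i} x
      = ((if x i = false ∧ x ∈ S then (1:ℤ) else 0)
          - (if x i = false ∧ x ∉ S then (1:ℤ) else 0))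
        - ((if x i = true ∧ x ∈ S then (1:ℤ) else 0)
          - (if x i = true ∧ x ∉ S then (1:ℤ) else 0)) := by
    intro x
    unfold fS chi
    rw [Finset.prod_singleton]
    cases hxi : x i <;> by_cases h2 : x ∈ S <;> simp [hxi, h2]
  rw [Finset.sum_congr rfl (fun x _ => hpt x)]
  rw [Finset.sum_sub_distrib, Finset.sum_sub_distrib, Finset.sum_sub_distrib]
  rw [Finset.sum_boole, Finset.sum_boole, Finset.sum_boole, Finset.sum_boole]
  have hsplitf := filter_split_card (fun x : Fin n → Bool => x i = false) (fun x => x ∈ S)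
  have hsplitt := filter_split_card (fun x : Fin n → Bool => x i = true) (fun x => x ∈ S)
  have hhalf := half_card_eq i
  simp only [sCnt]
  zify at hsplitf hsplitt hhalf
  linarith


lemma fS_sq_sum {n : ℕ} (S : Finset (Fin n → Bool)) :
    ∑ x : Fin n → Bool, (fS S x)^2 = (2^n : ℤ) := by
  have hpt : ∀ x : Fin n → Bool, (fS S x)^2 = 1 := by
    intro x; unfold fS; split <;> norm_num
  rw [Finset.sum_congr rfl (fun x _ => hpt x), Finset.sum_const, card_univ_bool]
  simp

lemma singleton_filter_sum {n : ℕ} (S : Finset (Fin n → Bool)) :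
    ∑ T ∈ Finset.univ.filter (fun T : Finset (Fin n) => T.card = 1), (fcoef S T)^2
      = ∑ i : Fin n, (fcoef S {i})^2 := by
  have himg : Finset.univ.filter (fun T : Finset (Fin n) => T.card = 1)
      = Finset.univ.image (fun i : Fin n => ({i} : Finset (Fin n))) := by
    ext T
    simp only [Finset.mem_filter, Finset.mem_univ, true_and, Finset.mem_image,
      Finset.card_eq_one]
    constructor
    · rintro ⟨a, rfl⟩; exact ⟨a, rfl⟩
    · rintro ⟨a, rfl⟩; exact ⟨a, rfl⟩
  rw [himg, Finset.sum_image (fun a _ b _ h => Finset.singleton_injective h)]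

lemma master_ineq {n : ℕ} (S : Finset (Fin n → Bool)) (hcard : 2 * S.card = 2^n) :
    2 * ((2^n : ℤ) * 2^n)
      ≤ 2^(n+1) * (edgeBoundary n S : ℤ) + ∑ i : Fin n, (fcoef S {i})^2 := by
  have hpar : ∑ T : Finset (Fin n), (fcoef S T)^2
      = 2^n * ∑ x : Fin n → Bool, (fS S x)^2 := parseval (fS S)
  rw [fS_sq_sum] at hpar
  have hpt : ∀ T : Finset (Fin n), 2 * (fcoef S T)^2
      ≤ (T.card : ℤ) * (fcoef S T)^2
        + ((if T = ∅ then 2 * (fcoef S T)^2 else 0)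
           + (if T.card = 1 then (fcoef S T)^2 else 0)) := by
    intro T
    by_cases h0 : T = ∅
    · rw [if_pos h0, h0]
      simp
    · rw [if_neg h0]
      by_cases h1 : T.card = 1
      · rw [if_pos h1, h1]
        push_cast
        nlinarith [sq_nonneg (fcoef S T)]
      · rw [if_neg h1]
        have h2 : 2 ≤ T.card := by
          have : T.card ≠ 0 := fun hc => h0 (Finset.card_eq_zero.mp hc)
          omega
        have h2' : (2:ℤ) ≤ (T.card : ℤ) := by exact_mod_cast h2
        nlinarith [sq_nonneg (fcoef S T)]
  have hsum := Finset.sum_le_sum (fun T (_ : T ∈ Finset.univ) => hpt T)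
  rw [Finset.sum_add_distrib, Finset.sum_add_distrib] at hsum
  rw [← Finset.mul_sum, hpar, weighted_sum] at hsum
  rw [Finset.sum_ite_eq' Finset.univ (∅ : Finset (Fin n))
    (fun T => 2 * (fcoef S T)^2)] at hsum
  rw [if_pos (Finset.mem_univ _), fcoef_empty S hcard] at hsum
  rw [← Finset.sum_filter, singleton_filter_sum] at hsum
  calc 2 * ((2^n : ℤ) * 2^n) = 2 * (2^n * 2^n) := rfl
    _ ≤ _ := by
        have : (0:ℤ)^2 = 0 := by norm_num
        rw [this] at hsum
        linarith

/-- Case 2: every half plane is nearly balanced. -/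
lemma case2 {n : ℕ} (S : Finset (Fin n → Bool)) (hcard : 2 * S.card = 2^n)
    (hbal : ∀ (i : Fin n) (a : Bool), 2^n ≤ 6 * sCnt S i a) :
    6 * (2^n * 2^n) ≤ 2^(n+3) * edgeBoundary n S := by
  have key : ∀ i : Fin n, 3 * (fcoef S {i})^2 ≤ 2 * 2^n * (dCnt S i : ℤ) := by
    intro i
    have hsf := hbal i false
    have hst := hbal i true
    have hadd := sCnt_add S i
    have hbalcnt := sCnt_crossCnt_balance S i
    have hdsplit := dCnt_split S i
    set sf := sCnt S i false
    set st := sCnt S i true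
    set D : ℤ := (sf : ℤ) - (st : ℤ) with hD
    have hPn : ((2^n : ℕ) : ℤ) = (2:ℤ)^n := by push_cast; rfl
    obtain ⟨P, hP⟩ : ∃ P : ℕ, 2^n = P := ⟨_, rfl⟩
    rw [hP] at hsf hst hcard
    have h6 : 6 * |D| ≤ (2:ℤ)^n := by
      rw [← hPn, hP]
      rcases abs_cases D with ⟨h, _⟩ | ⟨h, _⟩ <;> rw [h, hD] <;> omega
    have habs : |D| ≤ (dCnt S i : ℤ) := by
      rcases abs_cases D with ⟨h, _⟩ | ⟨h, _⟩ <;> rw [h, hD] <;> omega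
    have hfc : fcoef S {i} = 2 * D := fcoef_singleton S i
    have hsq : (fcoef S {i})^2 = 4 * (|D| * |D|) := by
      rw [hfc, abs_mul_abs_self]
      ring
    have hprod : (6 * |D|) * |D| ≤ 2^n * (dCnt S i : ℤ) := by
      apply mul_le_mul h6 habs (abs_nonneg D)
      positivity
    rw [hsq]
    nlinarith [abs_nonneg D]
  have hkeysum := Finset.sum_le_sum (fun i (_ : i ∈ Finset.univ) => key i)
  have hθ : ∑ i : Fin n, (dCnt S i : ℤ) = (edgeBoundary n S : ℤ) := by
    rw [edgeBoundary_eq_sum_dCnt]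
    push_cast
    rfl
  have h1 : ∑ i : Fin n, 2 * 2^n * (dCnt S i : ℤ) = 2 * 2^n * (edgeBoundary n S : ℤ) := by
    rw [← Finset.mul_sum, hθ]
  rw [h1, ← Finset.mul_sum] at hkeysum
  have hmaster := master_ineq S hcard
  have hfin : 6 * ((2^n : ℤ) * 2^n) ≤ 2^(n+3) * (edgeBoundary n S : ℤ) := by
    have hexp : (3:ℤ) * 2^(n+1) + 2 * 2^n = 2^(n+3) := by
      rw [pow_succ, pow_succ, pow_succ, pow_succ]
      ring
    nlinarith [hmaster, hkeysum]
  exact_mod_cast hfin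

-- ============ final assembly ============

lemma harper_compl {m : ℕ} (X : Finset (Fin m → Bool)) (t : ℕ)
    (h : X.card + t = 2^m) :
    m * t ≤ edgeBoundary m X + 2 * Ecal t := by
  have hb := harper_bound m (Finset.univ \ X)
  rw [edgeBoundary_compl] at hb
  rw [Finset.card_sdiff_of_subset (Finset.subset_univ X), card_univ_bool] at hb
  rw [show 2^m - X.card = t by omega] at hb
  exact hb

lemma slice_min_bound {m : ℕ} (i : Fin (m+1)) (S : Finset (Fin (m+1) → Bool)) :
    edgeBoundary m (gPre m i false S) + edgeBoundary m (gPre m i true S)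
      + ((gPre m i false S).card + (gPre m i true S).card
         - 2 * min (gPre m i false S).card (gPre m i true S).card)
      ≤ edgeBoundary (m+1) S := by
  have hs := edgeBoundary_slice i S
  have h1 := le_card_sdiff (gPre m i true S) (gPre m i false S)
  have h2 := le_card_sdiff (gPre m i false S) (gPre m i true S)
  rcases le_total (gPre m i false S).card (gPre m i true S).card with h | h
  · rw [min_eq_left h]; omega
  · rw [min_eq_right h]; omega

theorem theta_main (n : ℕ) (hn : 5 ≤ n)
    (S : Finset (Fin n → Bool)) (hcard : S.card = 2^(n-1))
    (htype : typeOf n S > 2^(n-3)) :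
    edgeBoundary n S ≥ 3 * 2^(n-2) := by
  obtain ⟨k, rfl⟩ : ∃ k, n = k + 5 := ⟨n - 5, by omega⟩
  have e1 : k + 5 - 1 = k + 4 := by omega
  have e2 : k + 5 - 2 = k + 3 := by omega
  have e3 : k + 5 - 3 = k + 2 := by omega
  rw [e1] at hcard
  rw [e3] at htype
  rw [ge_iff_le, e2]
  -- type lower bound on every half plane count
  have htlb : ∀ (i : Fin (k+5)) (a : Bool), 2^(k+2) + 1 ≤ sCnt S i a := by
    intro i a
    have hmem : (S ∩ halfPlane (k+5) i a).card ∈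
        {m | ∃ (i : Fin (k+5)) (a : Bool), (S ∩ halfPlane (k+5) i a).card = m} := ⟨i, a, rfl⟩
    have hle := Nat.sInf_le hmem
    have : typeOf (k+5) S ≤ sCnt S i a := by
      rw [← sCnt_eq_inter]
      exact hle
    omega
  by_cases hbal : ∀ (i : Fin (k+5)) (a : Bool), 2^(k+5) ≤ 6 * sCnt S i a
  · -- Case 2 : all halfplanes nearly balanced; spectral bound
    have hc2 : 2 * S.card = 2^(k+5) := by
      rw [hcard, ← pow_succ']
    have hcase := case2 S hc2 hbal
    have hfact : 6 * (2^(k+5) * 2^(k+5)) = 2^(k+8) * (3 * 2^(k+3)) := by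
      rw [show k+5 = k+3+2 by omega, show k+8 = k+3+5 by omega]
      rw [pow_add, pow_add, pow_add]
      ring
    rw [hfact] at hcase
    exact Nat.le_of_mul_le_mul_left hcase (by positivity)
  · -- Case 1 : some halfplane is markedly smaller; Harper + slicing
    push_neg at hbal
    obtain ⟨i, a, hsmall⟩ := hbal
    set t := sCnt S i a with htdef
    have htl : 2^(k+2) + 1 ≤ t := htlb i a
    -- powers of two facts
    have p1 : 2^(k+3) = 2 * 2^(k+2) := by rw [pow_succ]; ring
    have p2 : 2^(k+4) = 4 * 2^(k+2) := by rw [show k+4 = k+2+2 by omega, pow_add]; ring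
    have p3 : (2:ℕ)^(k+5) = 8 * 2^(k+2) := by rw [show k+5 = k+2+3 by omega, pow_add]; ring
    have p4 : (2:ℕ)^(k+2) = 2 * 2^(k+1) := by rw [pow_succ]; ring
    have ht3 : 3 * t < 2^(k+4) := by omega
    set r := t - 2^(k+2) with hrdef
    have htr : t = 2^(k+2) + r := by omega
    have hr3 : 3 * r < 2^(k+2) := by omega
    have hr1 : r ≤ 2^(k+1) := by omega
    -- Ecal bounds
    have hEt : Ecal t = Ecal (2^(k+2)) + r + Ecal r := by
      rw [htr]
      exact Ecal_pow_add (k+2) r (by omega)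
    have hEp : 2 * Ecal (2^(k+2)) = (k+2) * 2^(k+2) := Ecal_pow (k+2)
    have hEr : 2 * Ecal r ≤ (k+1) * r := Ecal_le_of_le (k+1) r hr1
    -- slice cards
    have hSc : S.card = 2^(k+4) := hcard
    have hf := gPre_card i false S
    have ht' := gPre_card i true S
    have hadd := sCnt_add S i
    have hcards : ((gPre (k+4) i false S).card = t
          ∧ (gPre (k+4) i true S).card + t = 2^(k+4))
        ∨ ((gPre (k+4) i true S).card = t
          ∧ (gPre (k+4) i false S).card + t = 2^(k+4)) := by
      cases a
      · left
        constructor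
        · rw [hf]
        · rw [ht']; omega
      · right
        constructor
        · rw [ht']
        · rw [hf]; omega
    -- Harper bounds on both slices
    have hHf : (k+4) * t ≤ edgeBoundary (k+4) (gPre (k+4) i false S) + 2 * Ecal t := by
      rcases hcards with ⟨h1, h2⟩ | ⟨h1, h2⟩
      · have := harper_bound (k+4) (gPre (k+4) i false S)
        rw [h1] at this
        exact this
      · exact harper_compl _ t h2
    have hHt : (k+4) * t ≤ edgeBoundary (k+4) (gPre (k+4) i true S) + 2 * Ecal t := by
      rcases hcards with ⟨h1, h2⟩ | ⟨h1, h2⟩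
      · exact harper_compl _ t h2
      · have := harper_bound (k+4) (gPre (k+4) i true S)
        rw [h1] at this
        exact this
    -- cross-edge bound
    have hmincards : (gPre (k+4) i false S).card + (gPre (k+4) i true S).card = 2^(k+4)
        ∧ min (gPre (k+4) i false S).card (gPre (k+4) i true S).card = t := by
      rcases hcards with ⟨h1, h2⟩ | ⟨h1, h2⟩
      · constructor
        · omega
        · rw [h1]; rw [show (gPre (k+4) i true S).card = 2^(k+4) - t by omega]
          omega
      · constructor
        · omega
        · rw [h1]; rw [show (gPre (k+4) i false S).card = 2^(k+4) - t by omega]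
          omega
    have hslice0 := slice_min_bound i S
    have hslice : edgeBoundary (k+4) (gPre (k+4) i false S)
        + edgeBoundary (k+4) (gPre (k+4) i true S)
        + ((gPre (k+4) i false S).card + (gPre (k+4) i true S).card
           - 2 * min (gPre (k+4) i false S).card (gPre (k+4) i true S).card)
        ≤ edgeBoundary (k+5) S := hslice0
    rw [hmincards.1, hmincards.2] at hslice
    -- nonlinear expansions for omega
    have x1 : (k+4) * t = k * 2^(k+2) + 4 * 2^(k+2) + k * r + 4 * r := by
      rw [htr]; ring
    have x2 : (k+2) * 2^(k+2) = k * 2^(k+2) + 2 * 2^(k+2) := by ring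
    have x3 : (k+1) * r = k * r + r := by ring
    omega

/-- For `n ≥ 5`, if `|S| = 2^{n−1}` and `Type(S) > 2^{n−3}`,
then `θ(n,S) ≥ 3·2^{n−2}`. -/
theorem theta_lower_bound_half_big_type (n : ℕ) (hn : 5 ≤ n)
    (S : Finset (Fin n → Bool)) (hcard : S.card = 2^(n-1))
    (htype : typeOf n S > 2^(n-3)) :
    edgeBoundary n S ≥ 3 * 2^(n-2) :=
  theta_main n hn S hcard htype
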